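/- Let σ > 0, q ∈ (0,1), α > 1, μ0 and μ1 the densities of N(0,σ²) and N(1,σ²), and z₀ = 1/2 + σ² ln(1 + 1/(q(α−1))). Then ∫_{−∞}^{z₀} μ0(z)·((1−q) + q μ1(z)/μ0(z))^α dz ≤ 1 + q²α(α−1)(exp(1/σ²) − 1). -/

import Mathlib

open Real MeasureTheory

noncomputable def gaussPdf (σ m x : ℝ) : ℝ :=
  (1 / (σ * Real.sqrt (2 * Real.pi))) * Real.exp (-(x - m) ^ 2 / (2 * σ ^ 2))

lemma key_pointwise {α x : ℝ} (hα : 1 < α) (hx : -1 < x) (hx2 : (α - 1) * x ≤ 1) :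
    (1 + x) ^ α ≤ 1 + α * x + α * (α - 1) * x ^ 2 := by
  have hy : (0:ℝ) < 1 + x := by linarith
  rcases le_total α 2 with h2 | h2
  · -- α ∈ (1,2]
    have hb : (1 + x) ^ (α - 1) ≤ 1 + (α - 1) * x :=
      rpow_one_add_le_one_add_mul_self (by linarith) (by linarith) (by linarith)
    have hsplit := Real.rpow_add hy 1 (α - 1)
    rw [Real.rpow_one] at hsplit
    rw [show (1:ℝ) + (α - 1) = α by ring] at hsplit
    rw [hsplit]
    calc (1 + x) * (1 + x) ^ (α - 1) ≤ (1 + x) * (1 + (α - 1) * x) :=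
          mul_le_mul_of_nonneg_left hb (by linarith)
      _ ≤ 1 + α * x + α * (α - 1) * x ^ 2 := by nlinarith [sq_nonneg ((α-1)*x)]
  · -- α ≥ 2
    have hsplit := Real.rpow_add hy 2 (α - 2)
    rw [Real.rpow_two] at hsplit
    rw [show (2:ℝ) + (α - 2) = α by ring] at hsplit
    have he : (1 + x) ^ (α - 2) ≤ exp ((α - 2) * x) := by
      calc (1 + x) ^ (α - 2) ≤ (exp x) ^ (α - 2) :=
            Real.rpow_le_rpow hy.le (by linarith [add_one_le_exp x]) (by linarith)
        _ = exp ((α - 2) * x) := by rw [← Real.exp_mul, mul_comm]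
    rcases le_total x 0 with hx0 | hx0
    · -- x ≤ 0
      have hv : (α - 2) * x ≤ 0 := mul_nonpos_of_nonneg_of_nonpos (by linarith) hx0
      have hd : (0:ℝ) < 1 - (α - 2) * x := by linarith
      have hee : exp ((α - 2) * x) ≤ 1 / (1 - (α - 2) * x) := by
        rw [le_div_iff₀ hd]
        calc exp ((α - 2) * x) * (1 - (α - 2) * x)
            ≤ exp ((α - 2) * x) * exp (-((α - 2) * x)) :=
              mul_le_mul_of_nonneg_left (by linarith [add_one_le_exp (-((α-2)*x))]) (exp_pos _).le
          _ = 1 := by rw [← Real.exp_add]; simp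
      rw [hsplit]
      calc (1 + x) ^ 2 * (1 + x) ^ (α - 2) ≤ (1 + x) ^ 2 * (1 / (1 - (α - 2) * x)) :=
            mul_le_mul_of_nonneg_left (he.trans hee) (sq_nonneg _)
        _ ≤ 1 + α * x + α * (α - 1) * x ^ 2 := by
            rw [mul_one_div, div_le_iff₀ hd]
            nlinarith [sq_nonneg x,
              mul_nonneg (mul_nonneg (by linarith : (0:ℝ) ≤ α - 2) (by linarith : (0:ℝ) ≤ α - 1)) (sq_nonneg x),
              mul_nonneg (mul_nonneg (mul_nonneg (by linarith : (0:ℝ) ≤ α) (by linarith : (0:ℝ) ≤ α - 1)) (by linarith : (0:ℝ) ≤ α - 2)) (mul_nonneg (neg_nonneg.2 hx0) (sq_nonneg x))]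
    · -- x ≥ 0
      have hw1 : (α - 2) * x ≤ 1 := le_trans (by nlinarith) hx2
      have hw0 : 0 ≤ (α - 2) * x := mul_nonneg (by linarith) hx0
      have hee : exp ((α - 2) * x) ≤ 1 + (α - 2) * x + ((α - 2) * x) ^ 2 * (3/4) := by
        have h := Real.exp_bound' hw0 hw1 (n := 2) (by norm_num)
        norm_num [Finset.sum_range_succ] at h
        linarith
      rw [hsplit]
      have ht : 0 ≤ 1 - (α - 1) * x := by linarith
      have ht' : 0 ≤ 1 + (α - 1) * x := by nlinarith
      have hγ : (0:ℝ) ≤ α - 2 := by linarith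
      calc (1 + x) ^ 2 * (1 + x) ^ (α - 2)
          ≤ (1 + x) ^ 2 * (1 + (α - 2) * x + ((α - 2) * x) ^ 2 * (3/4)) :=
            mul_le_mul_of_nonneg_left (he.trans hee) (sq_nonneg _)
        _ ≤ 1 + α * x + α * (α - 1) * x ^ 2 := by
            nlinarith [mul_nonneg hx0 ht, mul_nonneg hγ ht, mul_nonneg (mul_nonneg hγ hγ) ht,
              mul_nonneg (mul_nonneg hγ hx0) ht,
              mul_nonneg (mul_nonneg (mul_nonneg hγ hγ) hx0) ht,
              mul_nonneg (mul_nonneg (mul_nonneg hγ hγ) hx0) (mul_nonneg hx0 ht),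
              mul_nonneg (mul_nonneg hγ hγ) (mul_nonneg ht ht'),
              mul_nonneg (mul_nonneg (mul_nonneg hγ hγ) (mul_nonneg hx0 hx0)) (mul_nonneg ht ht'),
              mul_nonneg ht ht', sq_nonneg ((α-2)*x)]

lemma quad_nonneg {α x : ℝ} (hα : 1 < α) (hx : -1 ≤ x) :
    0 ≤ 1 + α * x + α * (α - 1) * x ^ 2 := by
  rcases le_total x 0 with h | h
  · rcases eq_or_lt_of_le h with h0 | h0
    · rw [h0]; norm_num
    · have hx2 : (0:ℝ) < x^2 := by nlinarith
      have key : 0 ≤ 4*x^2*(1 + α * x + α * (α - 1) * x ^ 2) := by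
        nlinarith [sq_nonneg (2*x^2*α + x - x^2),
          mul_nonneg (mul_nonneg (sq_nonneg x) (by linarith : (0:ℝ) ≤ 1 + x))
            (by linarith : (0:ℝ) ≤ 3 - x)]
      nlinarith [key, hx2]
  · nlinarith [mul_nonneg (by linarith : (0:ℝ) ≤ α) h,
      mul_nonneg (mul_nonneg (by linarith : (0:ℝ) ≤ α) (by linarith : (0:ℝ) ≤ α - 1)) (sq_nonneg x)]

lemma gaussPdf_pos {σ : ℝ} (hσ : 0 < σ) (m x : ℝ) : 0 < gaussPdf σ m x := by
  unfold gaussPdf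
  have := Real.pi_pos
  positivity

lemma gaussPdf_eq {σ : ℝ} (hσ : 0 < σ) (m : ℝ) :
    gaussPdf σ m = ProbabilityTheory.gaussianPDFReal m ⟨σ^2, sq_nonneg σ⟩ := by
  ext x
  simp only [gaussPdf, ProbabilityTheory.gaussianPDFReal, NNReal.coe_mk]
  have h1 : Real.sqrt (2*π*σ^2) = σ * Real.sqrt (2*π) := by
    rw [Real.sqrt_mul (by positivity : (0:ℝ) ≤ 2*π), Real.sqrt_sq hσ.le]
    ring
  change _ = (√(2 * π * σ ^ 2))⁻¹ * rexp (-(x - m) ^ 2 / (2 * σ ^ 2))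
  rw [h1, one_div]

lemma integral_gaussPdf {σ : ℝ} (hσ : 0 < σ) (m : ℝ) : ∫ x, gaussPdf σ m x = 1 := by
  rw [gaussPdf_eq hσ]
  exact ProbabilityTheory.integral_gaussianPDFReal_eq_one m
    (by apply ne_of_gt; apply NNReal.coe_pos.mp; change (0:ℝ) < σ^2; positivity)

lemma integrable_gaussPdf {σ : ℝ} (hσ : 0 < σ) (m : ℝ) : Integrable (gaussPdf σ m) := by
  rw [gaussPdf_eq hσ]
  exact ProbabilityTheory.integrable_gaussianPDFReal m _

lemma gauss_ratio {σ : ℝ} (hσ : 0 < σ) (z : ℝ) :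
    gaussPdf σ 1 z / gaussPdf σ 0 z = Real.exp ((2*z - 1)/(2*σ^2)) := by
  unfold gaussPdf
  rw [mul_div_mul_left _ _ (by positivity : (1:ℝ)/(σ*Real.sqrt (2*Real.pi)) ≠ 0),
    ← Real.exp_sub]
  congr 1
  have : σ^2 ≠ 0 := by positivity
  field_simp
  ring

lemma mu1_eq {σ : ℝ} (hσ : 0 < σ) (z : ℝ) :
    gaussPdf σ 0 z * Real.exp ((2*z - 1)/(2*σ^2)) = gaussPdf σ 1 z := by
  unfold gaussPdf
  rw [mul_assoc, ← Real.exp_add]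
  congr 2
  have : σ^2 ≠ 0 := by positivity
  field_simp
  ring

lemma mu2_eq {σ : ℝ} (hσ : 0 < σ) (z : ℝ) :
    gaussPdf σ 0 z * (Real.exp ((2*z - 1)/(2*σ^2)))^2
      = Real.exp (1/σ^2) * gaussPdf σ 2 z := by
  have hσ2 : σ^2 ≠ 0 := by positivity
  have e1 : Real.exp ((2*z - 1)/(2*σ^2)) ^ 2 = Real.exp ((2*z - 1)/σ^2) := by
    rw [sq, ← Real.exp_add]
    congr 1
    field_simp
    ring
  unfold gaussPdf
  rw [e1, mul_assoc, ← Real.exp_add,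
    mul_comm (Real.exp (1/σ^2)), mul_assoc, ← Real.exp_add]
  congr 2
  have : σ^2 ≠ 0 := by positivity
  field_simp
  ring

theorem A_alpha_one_bound (σ q α : ℝ) (hσ : 0 < σ) (hq0 : 0 < q) (hq1 : q < 1)
    (hα : 1 < α) :
    ∫ z in Set.Iio ((1 : ℝ) / 2 + σ ^ 2 * Real.log (1 + 1 / (q * (α - 1)))),
        gaussPdf σ 0 z * ((1 - q) + q * (gaussPdf σ 1 z / gaussPdf σ 0 z)) ^ α ≤
      1 + q ^ 2 * α * (α - 1) * (Real.exp (1 / σ ^ 2) - 1) := by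
  have hα1 : (0:ℝ) < α - 1 := by linarith
  have hσ2 : (0:ℝ) < σ^2 := by positivity
  set K : ℝ := α * (α - 1) with hK
  set z₀ : ℝ := (1 : ℝ) / 2 + σ ^ 2 * Real.log (1 + 1 / (q * (α - 1))) with hz₀
  set f : ℝ → ℝ := fun z =>
    gaussPdf σ 0 z * ((1 - q) + q * (gaussPdf σ 1 z / gaussPdf σ 0 z)) ^ α with hf
  set a : ℝ := 1 - α*q + K*q^2 with ha
  set b : ℝ := α*q - 2*K*q^2 with hb
  set c : ℝ := K*q^2 * Real.exp (1/σ^2) with hc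
  set g : ℝ → ℝ := fun z =>
    a * gaussPdf σ 0 z + b * gaussPdf σ 1 z + c * gaussPdf σ 2 z with hg
  have hgsum : ∀ z, g z = gaussPdf σ 0 z *
      (1 + α*(q*(Real.exp ((2*z - 1)/(2*σ^2)) - 1))
        + K*(q*(Real.exp ((2*z - 1)/(2*σ^2)) - 1))^2) := by
    intro z
    have h1 := mu1_eq hσ z
    have h2 := mu2_eq hσ z
    simp only [hg]
    rw [← h1, show c * gaussPdf σ 2 z
        = K*q^2*(gaussPdf σ 0 z * (Real.exp ((2*z - 1)/(2*σ^2)))^2) by rw [h2, hc]; ring]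
    ring
  have hg0 : ∀ z, 0 ≤ g z := by
    intro z
    rw [hgsum z]
    have hr : 0 < Real.exp ((2*z - 1)/(2*σ^2)) := Real.exp_pos _
    refine mul_nonneg (gaussPdf_pos hσ 0 z).le ?_
    have hx : (-1:ℝ) ≤ q*(Real.exp ((2*z - 1)/(2*σ^2)) - 1) := by nlinarith
    exact quad_nonneg hα hx
  have hcg : ∀ m : ℝ, Continuous (gaussPdf σ m) := by
    intro m
    unfold gaussPdf
    exact continuous_const.mul
      (Real.continuous_exp.comp (((continuous_id.sub continuous_const).pow 2).neg.div_const _))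
  have hcf : Continuous f := by
    rw [hf]
    refine (hcg 0).mul ?_
    refine Continuous.rpow_const ?_ (fun z => Or.inr (by linarith))
    exact continuous_const.add (continuous_const.mul
      ((hcg 1).div (hcg 0) (fun z => (gaussPdf_pos hσ 0 z).ne')))
  have hgi : Integrable g := by
    exact (((integrable_gaussPdf hσ 0).const_mul a).add
      ((integrable_gaussPdf hσ 1).const_mul b)).add
      ((integrable_gaussPdf hσ 2).const_mul c)
  have hf0 : ∀ z, 0 ≤ f z := by
    intro z
    refine mul_nonneg (gaussPdf_pos hσ 0 z).le (Real.rpow_nonneg ?_ α)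
    have : 0 < gaussPdf σ 1 z / gaussPdf σ 0 z :=
      div_pos (gaussPdf_pos hσ 1 z) (gaussPdf_pos hσ 0 z)
    nlinarith
  have hfg : ∀ z ∈ Set.Iio z₀, f z ≤ g z := by
    intro z hz
    rw [hgsum z, hf]
    simp only
    rw [gauss_ratio hσ z]
    have hrpos : 0 < Real.exp ((2*z - 1)/(2*σ^2)) := Real.exp_pos _
    rw [show (1 - q) + q * Real.exp ((2*z - 1)/(2*σ^2))
        = 1 + q * (Real.exp ((2*z - 1)/(2*σ^2)) - 1) by ring]
    refine mul_le_mul_of_nonneg_left ?_ (gaussPdf_pos hσ 0 z).le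
    have hx1 : (-1:ℝ) < q * (Real.exp ((2*z - 1)/(2*σ^2)) - 1) := by nlinarith
    have hR : (0:ℝ) < 1 + 1/(q*(α-1)) := by positivity
    have hrle : Real.exp ((2*z - 1)/(2*σ^2)) ≤ 1 + 1/(q*(α-1)) := by
      have hle : (2*z - 1)/(2*σ^2) ≤ Real.log (1 + 1/(q*(α-1))) := by
        rw [div_le_iff₀ (by positivity : (0:ℝ) < 2*σ^2)]
        have := hz
        rw [Set.mem_Iio, hz₀] at this
        nlinarith
      calc Real.exp ((2*z - 1)/(2*σ^2)) ≤ Real.exp (Real.log (1 + 1/(q*(α-1)))) :=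
            Real.exp_le_exp.2 hle
        _ = 1 + 1/(q*(α-1)) := Real.exp_log hR
    have hx2 : (α - 1) * (q * (Real.exp ((2*z - 1)/(2*σ^2)) - 1)) ≤ 1 := by
      have hq' : (0:ℝ) < q*(α-1) := by positivity
      have h1 : q * (Real.exp ((2*z - 1)/(2*σ^2)) - 1) ≤ q * (1/(q*(α-1))) := by
        refine mul_le_mul_of_nonneg_left ?_ hq0.le
        linarith
      calc (α - 1) * (q * (Real.exp ((2*z - 1)/(2*σ^2)) - 1))
          ≤ (α - 1) * (q * (1/(q*(α-1)))) := mul_le_mul_of_nonneg_left h1 hα1.le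
        _ = 1 := by field_simp
    have := key_pointwise hα hx1 hx2
    rw [hK]
    linarith
  have hfi : IntegrableOn f (Set.Iio z₀) := by
    refine Integrable.mono' hgi.integrableOn (hcf.aestronglyMeasurable.restrict) ?_
    rw [ae_restrict_iff' measurableSet_Iio]
    exact ae_of_all _ (fun z hz => by
      rw [Real.norm_eq_abs, abs_of_nonneg (hf0 z)]; exact hfg z hz)
  calc ∫ z in Set.Iio z₀, f z ≤ ∫ z in Set.Iio z₀, g z :=
        setIntegral_mono_on hfi hgi.integrableOn measurableSet_Iio hfg
    _ ≤ ∫ z, g z := setIntegral_le_integral hgi (ae_of_all _ hg0)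
    _ = a * 1 + b * 1 + c * 1 := by
        simp only [hg]
        have ia : Integrable (fun z => a * gaussPdf σ 0 z) := (integrable_gaussPdf hσ 0).const_mul a
        have ib : Integrable (fun z => b * gaussPdf σ 1 z) := (integrable_gaussPdf hσ 1).const_mul b
        have ic : Integrable (fun z => c * gaussPdf σ 2 z) := (integrable_gaussPdf hσ 2).const_mul c
        have iab : Integrable (fun z => a * gaussPdf σ 0 z + b * gaussPdf σ 1 z) := ia.add ib
        rw [integral_add iab ic, integral_add ia ib,
          integral_const_mul, integral_const_mul, integral_const_mul,
          integral_gaussPdf hσ 0, integral_gaussPdf hσ 1, integral_gaussPdf hσ 2]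
    _ = 1 + q ^ 2 * α * (α - 1) * (Real.exp (1 / σ ^ 2) - 1) := by
        rw [ha, hb, hc, hK]; ring
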